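/- arXiv:0906.5010 — 2 statements merged into one kernel-verified Lean document; each statement's English description precedes it below -/
import Mathlib

section
/- Let ν be a probability measure on a measurable space Ω, let f : Ω × Ω → {0,1} be measurable and symmetric, and let δ > 0 be such that for every w ∈ Ω, the probability over W′ ∼ ν that f(w, W′) = 1 is at most δ. Let W_1,…,W_m be independent ν-distributed random elements with m·δ ≥ 1, set p = E[f(W_1, W_2)] and X = Σ_{1≤i<j≤m} f(W_i, W_j). Then E[X] = (m choose 2)·p and Var(X) ≤ 7·δ·p·m³. -/
open MeasureTheory

section AuxStmt11

variable {Ω : Type*} [MeasurableSpace Ω] (ν : Measure Ω) [IsProbabilityMeasure ν] {m : ℕ}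

lemma stmt11_eval_map (i : Fin m) :
    (Measure.pi fun _ : Fin m => ν).map (fun ω => ω i) = ν := by
  classical
  ext s hs
  rw [Measure.map_apply (measurable_pi_apply i) hs]
  have h : (fun ω : Fin m → Ω => ω i) ⁻¹' s
      = Set.pi Set.univ (Function.update (fun _ : Fin m => (Set.univ : Set Ω)) i s) := by
    ext ω
    simp only [Set.mem_preimage, Set.mem_pi, Set.mem_univ, true_implies]
    constructor
    · intro hω j
      rcases eq_or_ne j i with rfl | hj
      · simpa using hω
      · simp [Function.update_apply, hj]
    · intro hω
      simpa using hω i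
  rw [h, Measure.pi_pi]
  have h2 : ∀ j : Fin m,
      ν (Function.update (fun _ : Fin m => (Set.univ : Set Ω)) i s j)
        = if j = i then ν s else 1 := by
    intro j
    rcases eq_or_ne j i with rfl | hj
    · simp
    · simp [Function.update_apply, hj]
  simp only [h2]
  simp [Finset.prod_ite_eq']

lemma stmt11_eval_preimage (i : Fin m) {s : Set Ω} (hs : MeasurableSet s) :
    (Measure.pi fun _ : Fin m => ν) ((fun ω : Fin m → Ω => ω i) ⁻¹' s) = ν s := by
  rw [← Measure.map_apply (measurable_pi_apply i) hs, stmt11_eval_map]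

lemma stmt11_iIndep :
    ProbabilityTheory.iIndepFun
      (fun (i : Fin m) (ω : Fin m → Ω) => ω i) (Measure.pi fun _ : Fin m => ν) := by
  classical
  rw [ProbabilityTheory.iIndepFun_iff_measure_inter_preimage_eq_mul]
  intro S sets hsets
  have h : (⋂ i ∈ S, (fun ω : Fin m → Ω => ω i) ⁻¹' sets i)
      = Set.pi Set.univ (fun i => if i ∈ S then sets i else Set.univ) := by
    ext ω
    simp only [Set.mem_iInter, Set.mem_preimage, Set.mem_pi, Set.mem_univ, true_implies]
    constructor
    · intro hω j
      by_cases hj : j ∈ S <;> simp [hj, hω]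
    · intro hω i hi
      simpa [hi] using hω i
  rw [h, Measure.pi_pi]
  have h2 : ∀ i : Fin m, ν (if i ∈ S then sets i else Set.univ)
      = if i ∈ S then ν (sets i) else 1 := by
    intro i; by_cases hi : i ∈ S <;> simp [hi]
  simp only [h2]
  rw [Finset.prod_ite_mem, Finset.univ_inter]
  exact Finset.prod_congr rfl fun i hi => (stmt11_eval_preimage ν i (hsets i hi)).symm

lemma stmt11_pair_map {i j : Fin m} (hij : i ≠ j) :
    (Measure.pi fun _ : Fin m => ν).map (fun ω => (ω i, ω j)) = ν.prod ν := by
  have h := (ProbabilityTheory.indepFun_iff_map_prod_eq_prod_map_map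
      (measurable_pi_apply i).aemeasurable (measurable_pi_apply j).aemeasurable).mp
      ((stmt11_iIndep ν).indepFun hij)
  rw [h, stmt11_eval_map, stmt11_eval_map]

lemma stmt11_triple_map {a b c : Fin m} (hab : a ≠ b) (hac : a ≠ c) (hbc : b ≠ c) :
    (Measure.pi fun _ : Fin m => ν).map (fun ω => (ω a, (ω b, ω c))) = ν.prod (ν.prod ν) := by
  have hInd := (((stmt11_iIndep ν).indepFun_prodMk (fun k => measurable_pi_apply k)
      b c a hab.symm hac.symm)).symm
  have h := (ProbabilityTheory.indepFun_iff_map_prod_eq_prod_map_map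
      (measurable_pi_apply a).aemeasurable
      (((measurable_pi_apply b).prodMk (measurable_pi_apply c)).aemeasurable)).mp hInd
  rw [h, stmt11_eval_map, stmt11_pair_map ν hbc]

end AuxStmt11

set_option maxHeartbeats 2000000 in
/-- For symmetric `{0,1}`-valued `f` with `Pr_{W'}(f w W' = 1) ≤ δ` for all
`w`, independent `ν`-random `W_1, …, W_m` with `m·δ ≥ 1`, `p = E[f(W_1,W_2)]` and
`X = ∑_{i<j} f(W_i, W_j)`, we have `E[X] = (m choose 2)·p` and `Var(X) ≤ 7·δ·p·m³`. -/
theorem stmt11 {Ω : Type*} [MeasurableSpace Ω] (ν : Measure Ω) [IsProbabilityMeasure ν]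
    (f : Ω → Ω → ℝ) (hmeas : Measurable (Function.uncurry f))
    (h01 : ∀ a b, f a b = 0 ∨ f a b = 1) (hsymm : ∀ a b, f a b = f b a)
    (δ : ℝ) (hδ : 0 < δ)
    (hbound : ∀ w, (ν {x | f w x = 1}).toReal ≤ δ)
    (m : ℕ) (hm : 1 ≤ (m : ℝ) * δ)
    (p : ℝ) (hp : p = ∫ q, f q.1 q.2 ∂(ν.prod ν))
    (X : (Fin m → Ω) → ℝ)
    (hX : X = fun ω => ∑ ij ∈ Finset.univ.filter (fun ij : Fin m × Fin m => ij.1 < ij.2),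
      f (ω ij.1) (ω ij.2)) :
    (∫ ω, X ω ∂(Measure.pi fun _ : Fin m => ν)) = (m.choose 2 : ℝ) * p ∧
      ProbabilityTheory.variance X (Measure.pi fun _ : Fin m => ν) ≤ 7 * δ * p * m ^ 3 := by
  classical
  set μ : Measure (Fin m → Ω) := Measure.pi fun _ : Fin m => ν with hμ
  set P : Finset (Fin m × Fin m) :=
    Finset.univ.filter (fun ij : Fin m × Fin m => ij.1 < ij.2) with hPdef
  have hf0 : ∀ a b, 0 ≤ f a b := fun a b => by rcases h01 a b with h | h <;> simp [h]
  have hf1 : ∀ a b, f a b ≤ 1 := fun a b => by rcases h01 a b with h | h <;> simp [h]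
  have habs : ∀ a b, |f a b| ≤ 1 := fun a b => abs_le.mpr ⟨by linarith [hf0 a b], hf1 a b⟩
  have hintf : Integrable (Function.uncurry f) (ν.prod ν) := by
    refine (integrable_const (1:ℝ)).mono' hmeas.aestronglyMeasurable ?_
    exact Filter.Eventually.of_forall fun q => by
      simpa [Function.uncurry, Real.norm_eq_abs] using habs q.1 q.2
  have hp0 : 0 ≤ p := hp ▸ integral_nonneg fun q => hf0 q.1 q.2
  have hFmeas : ∀ i j : Fin m, Measurable fun ω : Fin m → Ω => f (ω i) (ω j) :=
    fun i j => by
      have h : Measurable fun ω : Fin m → Ω => (ω i, ω j) :=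
        (measurable_pi_apply i).prodMk (measurable_pi_apply j)
      exact hmeas.comp h
  have hFint : ∀ i j : Fin m, Integrable (fun ω : Fin m → Ω => f (ω i) (ω j)) μ := by
    intro i j
    refine (integrable_const (1:ℝ)).mono' (hFmeas i j).aestronglyMeasurable ?_
    exact Filter.Eventually.of_forall fun ω => by
      simpa [Real.norm_eq_abs] using habs (ω i) (ω j)
  have hFFint : ∀ i j k l : Fin m,
      Integrable (fun ω : Fin m → Ω => f (ω i) (ω j) * f (ω k) (ω l)) μ := by
    intro i j k l
    refine (integrable_const (1:ℝ)).mono'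
      ((hFmeas i j).mul (hFmeas k l)).aestronglyMeasurable ?_
    refine Filter.Eventually.of_forall fun ω => ?_
    rw [Real.norm_eq_abs, abs_mul]
    exact mul_le_one₀ (habs _ _) (abs_nonneg _) (habs _ _)
  -- one-edge expectation
  have hE : ∀ i j : Fin m, i ≠ j → ∫ ω, f (ω i) (ω j) ∂μ = p := by
    intro i j hij
    have hmap := stmt11_pair_map ν hij
    have h1 : ∫ q, f q.1 q.2 ∂(ν.prod ν)
        = ∫ q, f q.1 q.2 ∂(μ.map (fun ω => (ω i, ω j))) := by rw [hmap]
    rw [hp, h1, integral_map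
      (((measurable_pi_apply i).prodMk (measurable_pi_apply j)).aemeasurable)
      hmeas.aestronglyMeasurable]
  -- cardinality of P
  have hcardP : P.card = m.choose 2 := by
    rw [hPdef, Finset.card_filter, Fintype.sum_prod_type_right]
    have h1 : ∀ j : Fin m,
        (∑ i : Fin m, if (i, j).1 < (i, j).2 then 1 else 0) = (j : ℕ) := by
      intro j
      rw [← Finset.card_filter]
      have : Finset.univ.filter (fun i : Fin m => (i, j).1 < (i, j).2) = Finset.Iio j := by
        ext i; simp [Finset.mem_Iio]
      rw [this, Fin.card_Iio]
    rw [Finset.sum_congr rfl fun j _ => h1 j, Fin.sum_univ_eq_sum_range (fun i => i) m,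
      Finset.sum_range_id, Nat.choose_two_right]
  have hm0 : m ≠ 0 := by
    rintro rfl
    norm_num at hm
  -- Part 1
  have hmemP : ∀ e ∈ P, e.1 ≠ e.2 := by
    intro e he
    exact ne_of_lt (Finset.mem_filter.mp he).2
  have hEX : ∫ ω, X ω ∂μ = (m.choose 2 : ℝ) * p := by
    rw [hX]
    rw [integral_finset_sum _ (fun e _ => hFint e.1 e.2)]
    rw [Finset.sum_congr rfl fun e he => hE e.1 e.2 (hmemP e he), Finset.sum_const, hcardP,
      nsmul_eq_mul]
  refine ⟨hEX, ?_⟩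
  have hXmeas : Measurable X := by
    rw [hX]; exact Finset.measurable_sum _ fun e _ => hFmeas e.1 e.2
  have hXmem : MemLp X 2 μ := by
    refine MemLp.of_bound hXmeas.aestronglyMeasurable (P.card : ℝ) ?_
    refine Filter.Eventually.of_forall fun ω => ?_
    rw [hX]
    calc ‖∑ e ∈ P, f (ω e.1) (ω e.2)‖ ≤ ∑ e ∈ P, ‖f (ω e.1) (ω e.2)‖ := norm_sum_le _ _
      _ ≤ ∑ _e ∈ P, 1 := Finset.sum_le_sum fun e _ => by
          simpa [Real.norm_eq_abs] using habs (ω e.1) (ω e.2)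
      _ = (P.card : ℝ) := by simp
  have hvar := ProbabilityTheory.variance_eq_sub hXmem
  have hX2 : ∫ ω, (X ^ 2) ω ∂μ
      = ∑ q ∈ P ×ˢ P, ∫ ω, f (ω q.1.1) (ω q.1.2) * f (ω q.2.1) (ω q.2.2) ∂μ := by
    have h1 : (X ^ 2)
        = fun ω => ∑ q ∈ P ×ˢ P, f (ω q.1.1) (ω q.1.2) * f (ω q.2.1) (ω q.2.2) := by
      funext ω
      simp only [Pi.pow_apply, hX, sq]
      rw [Finset.sum_mul_sum]
      exact (Finset.sum_product' (s := P) (t := P)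
        (f := fun e e' => f (ω e.1) (ω e.2) * f (ω e'.1) (ω e'.2))).symm
    rw [h1, integral_finset_sum _ fun q _ => hFFint q.1.1 q.1.2 q.2.1 q.2.2]
  have hEXsq : (∫ ω, X ω ∂μ) ^ 2 = ∑ _q ∈ P ×ˢ P, p ^ 2 := by
    rw [hEX, Finset.sum_const, Finset.card_product, hcardP, nsmul_eq_mul]
    push_cast
    ring
  have hvar2 : ProbabilityTheory.variance X μ
      = ∑ q ∈ P ×ˢ P,
        ((∫ ω, f (ω q.1.1) (ω q.1.2) * f (ω q.2.1) (ω q.2.2) ∂μ) - p ^ 2) := by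
    rw [hvar, hX2, hEXsq, ← Finset.sum_sub_distrib]
  -- shared-vertex bound
  have hS : ∀ a b c : Fin m, a ≠ b → a ≠ c → b ≠ c →
      (∫ ω, f (ω a) (ω b) * f (ω a) (ω c) ∂μ) ≤ δ * p := by
    intro a b c hab hac hbc
    have hmap := stmt11_triple_map ν hab hac hbc
    have hφ : Measurable (fun ω : Fin m → Ω => (ω a, (ω b, ω c))) := by
      have h1 : Measurable fun ω : Fin m → Ω => ω a := measurable_pi_apply a
      have h2 : Measurable fun ω : Fin m → Ω => ω b := measurable_pi_apply b
      have h3 : Measurable fun ω : Fin m → Ω => ω c := measurable_pi_apply c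
      exact h1.prodMk (h2.prodMk h3)
    have hgmeas : Measurable (fun x : Ω × Ω × Ω => f x.1 x.2.1 * f x.1 x.2.2) := by
      have h1 : Measurable fun x : Ω × Ω × Ω => f x.1 x.2.1 := by
        have : Measurable fun x : Ω × Ω × Ω => (x.1, x.2.1) :=
          measurable_fst.prodMk (measurable_fst.comp measurable_snd)
        exact hmeas.comp this
      have h2 : Measurable fun x : Ω × Ω × Ω => f x.1 x.2.2 := by
        have : Measurable fun x : Ω × Ω × Ω => (x.1, x.2.2) :=
          measurable_fst.prodMk (measurable_snd.comp measurable_snd)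
        exact hmeas.comp this
      exact h1.mul h2
    have hint : Integrable (fun x : Ω × Ω × Ω => f x.1 x.2.1 * f x.1 x.2.2)
        (ν.prod (ν.prod ν)) := by
      refine (integrable_const (1:ℝ)).mono' hgmeas.aestronglyMeasurable ?_
      refine Filter.Eventually.of_forall fun x => ?_
      rw [Real.norm_eq_abs, abs_mul]
      exact mul_le_one₀ (habs _ _) (abs_nonneg _) (habs _ _)
    have heq : (∫ ω, f (ω a) (ω b) * f (ω a) (ω c) ∂μ)
        = ∫ x : Ω × Ω × Ω, f x.1 x.2.1 * f x.1 x.2.2 ∂(ν.prod (ν.prod ν)) := by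
      rw [← hmap, integral_map hφ.aemeasurable hgmeas.aestronglyMeasurable]
    have hb : ∀ x : Ω, (∫ z, f x z ∂ν) ≤ δ := by
      intro x
      have hmx : Measurable (f x) := hmeas.of_uncurry_left
      have hsetm : MeasurableSet {z : Ω | f x z = 1} := hmx (measurableSet_singleton 1)
      have hind : (fun z => f x z) = Set.indicator {z : Ω | f x z = 1} (fun _ => (1:ℝ)) := by
        funext z
        rcases h01 x z with h | h
        · have hz : z ∉ {z : Ω | f x z = 1} := by simp [Set.mem_setOf_eq, h]
          simp [Set.indicator_of_notMem hz, h]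
        · have hz : z ∈ {z : Ω | f x z = 1} := h
          simp [Set.indicator_of_mem hz, h]
      rw [hind, integral_indicator_const _ hsetm]
      simpa [Measure.real] using hbound x
    have hnn : ∀ x : Ω, 0 ≤ ∫ y, f x y ∂ν := fun x => integral_nonneg fun y => hf0 x y
    have hinner : ∀ x : Ω, (∫ yz : Ω × Ω, f x yz.1 * f x yz.2 ∂(ν.prod ν))
        = (∫ y, f x y ∂ν) * (∫ z, f x z ∂ν) := fun x => integral_prod_mul (f x) (f x)
    have hint1 : Integrable (fun x : Ω => ∫ yz : Ω × Ω, f x yz.1 * f x yz.2 ∂(ν.prod ν)) ν :=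
      hint.integral_prod_left
    have hint2 : Integrable (fun x : Ω => (∫ y, f x y ∂ν) * δ) ν :=
      hintf.integral_prod_left.mul_const δ
    rw [heq, integral_prod _ hint]
    calc (∫ x, ∫ yz : Ω × Ω, f x yz.1 * f x yz.2 ∂(ν.prod ν) ∂ν)
        ≤ ∫ x, (∫ y, f x y ∂ν) * δ ∂ν := by
          refine integral_mono hint1 hint2 fun x => ?_
          rw [hinner x]
          exact mul_le_mul_of_nonneg_left (hb x) (hnn x)
      _ = (∫ x, ∫ y, f x y ∂ν ∂ν) * δ := integral_mul_const δ _
      _ = δ * p := by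
          have hp' : p = ∫ x, ∫ y, f x y ∂ν ∂ν := by
            rw [hp]; exact integral_prod (fun q : Ω × Ω => f q.1 q.2) hintf
          rw [hp']; ring
  -- disjoint-pair factorization
  have hD : ∀ i j k l : Fin m, i ≠ k → i ≠ l → j ≠ k → j ≠ l →
      (∫ ω, f (ω i) (ω j) * f (ω k) (ω l) ∂μ)
        = (∫ ω, f (ω i) (ω j) ∂μ) * (∫ ω, f (ω k) (ω l) ∂μ) := by
    intro i j k l hik hil hjk hjl
    have hInd := (stmt11_iIndep ν).indepFun_prodMk_prodMk
      (fun t => measurable_pi_apply t) i j k l hik hil hjk hjl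
    have hInd2 : ProbabilityTheory.IndepFun
        (fun ω : Fin m → Ω => f (ω i) (ω j)) (fun ω : Fin m → Ω => f (ω k) (ω l)) μ :=
      hInd.comp hmeas hmeas
    exact hInd2.integral_fun_mul_eq_mul_integral (hFint i j).aestronglyMeasurable (hFint k l).aestronglyMeasurable
  -- termwise bound
  have hterm : ∀ q ∈ P ×ˢ P,
      (∫ ω, f (ω q.1.1) (ω q.1.2) * f (ω q.2.1) (ω q.2.2) ∂μ) - p ^ 2
        ≤ (if q.1 = q.2 then p
            else if q.1.1 = q.2.1 ∨ q.1.1 = q.2.2 ∨ q.1.2 = q.2.1 ∨ q.1.2 = q.2.2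
              then δ * p else 0) := by
    rintro ⟨⟨i, j⟩, k, l⟩ hq
    rw [Finset.mem_product] at hq
    have hij : i < j := (Finset.mem_filter.mp hq.1).2
    have hkl : k < l := (Finset.mem_filter.mp hq.2).2
    dsimp only
    by_cases heq : ((i, j) : Fin m × Fin m) = ((k, l) : Fin m × Fin m)
    · have hik : i = k := congrArg Prod.fst heq
      have hjl : j = l := congrArg Prod.snd heq
      subst hik; subst hjl
      rw [if_pos rfl]
      have hcong : (fun ω : Fin m → Ω => f (ω i) (ω j) * f (ω i) (ω j))
          = fun ω => f (ω i) (ω j) := by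
        funext ω; rcases h01 (ω i) (ω j) with h | h <;> simp [h]
      rw [hcong, hE i j hij.ne]
      nlinarith [sq_nonneg p]
    · rw [if_neg heq]
      by_cases hsh : i = k ∨ i = l ∨ j = k ∨ j = l
      · rw [if_pos hsh]
        have hle : (∫ ω, f (ω i) (ω j) * f (ω k) (ω l) ∂μ) ≤ δ * p := by
          rcases hsh with h | h | h | h
          · subst h
            have hjl : j ≠ l := fun hj => heq (by rw [hj])
            exact hS i j l hij.ne hkl.ne hjl
          · subst h
            have hcong : (fun ω : Fin m → Ω => f (ω i) (ω j) * f (ω k) (ω i))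
                = fun ω => f (ω i) (ω j) * f (ω i) (ω k) := by
              funext ω; rw [hsymm (ω k) (ω i)]
            rw [hcong]
            exact hS i j k hij.ne hkl.ne' (lt_trans hkl hij).ne'
          · subst h
            have hcong : (fun ω : Fin m → Ω => f (ω i) (ω j) * f (ω j) (ω l))
                = fun ω => f (ω j) (ω i) * f (ω j) (ω l) := by
              funext ω; rw [hsymm (ω i) (ω j)]
            rw [hcong]
            exact hS j i l hij.ne' hkl.ne (lt_trans hij hkl).ne
          · subst h
            have hik : i ≠ k := fun hi => heq (by rw [hi])
            have hcong : (fun ω : Fin m → Ω => f (ω i) (ω j) * f (ω k) (ω j))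
                = fun ω => f (ω j) (ω i) * f (ω j) (ω k) := by
              funext ω; rw [hsymm (ω i) (ω j), hsymm (ω k) (ω j)]
            rw [hcong]
            exact hS j i k hij.ne' hkl.ne' hik
        nlinarith [sq_nonneg p]
      · rw [if_neg hsh]
        push_neg at hsh
        obtain ⟨hik, hil, hjk, hjl⟩ := hsh
        rw [hD i j k l hik hil hjk hjl, hE i j hij.ne, hE k l hkl.ne, sq]
        linarith
  -- sum evaluation
  have hbig : ProbabilityTheory.variance X μ
      ≤ ((((P ×ˢ P).filter (fun q => q.1 = q.2)).card : ℝ)) * p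
        + ((((P ×ˢ P).filter (fun q => ¬ q.1 = q.2)).filter
            (fun q : (Fin m × Fin m) × Fin m × Fin m =>
              q.1.1 = q.2.1 ∨ q.1.1 = q.2.2 ∨ q.1.2 = q.2.1 ∨ q.1.2 = q.2.2)).card : ℝ)
            * (δ * p) := by
    rw [hvar2]
    refine le_trans (Finset.sum_le_sum hterm) (le_of_eq ?_)
    rw [← Finset.sum_filter_add_sum_filter_not (P ×ˢ P) (fun q => q.1 = q.2)]
    congr 1
    · rw [Finset.sum_congr rfl (fun q hq => if_pos (Finset.mem_filter.mp hq).2),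
        Finset.sum_const, nsmul_eq_mul]
    · rw [Finset.sum_congr rfl (fun q hq => if_neg (Finset.mem_filter.mp hq).2)]
      conv_lhs => rw [← Finset.sum_filter]
      rw [Finset.sum_const, nsmul_eq_mul]
  -- counting bounds
  have htriple : (Finset.univ : Finset (Fin m × Fin m × Fin m)).card = m ^ 3 := by
    simp only [Finset.card_univ, Fintype.card_prod, Fintype.card_fin]
    ring
  have hinjle : ∀ (s : Finset ((Fin m × Fin m) × Fin m × Fin m))
      (g : (Fin m × Fin m) × Fin m × Fin m → Fin m × Fin m × Fin m),
      Set.InjOn g s → s.card ≤ m ^ 3 := by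
    intro s g hg
    calc s.card ≤ (Finset.univ : Finset (Fin m × Fin m × Fin m)).card :=
        Finset.card_le_card_of_injOn g (fun a _ => Finset.mem_univ _) hg
      _ = m ^ 3 := htriple
  have hc1 : ((P ×ˢ P).filter (fun q => q.1 = q.2)).card ≤ m ^ 2 := by
    have hinj : Set.InjOn (fun q : (Fin m × Fin m) × Fin m × Fin m => q.1)
        ((P ×ˢ P).filter (fun q => q.1 = q.2)) := by
      intro q hq r hr h1
      simp only [Finset.coe_filter, Set.mem_setOf_eq] at hq hr
      exact Prod.ext h1 (by rw [← hq.2, ← hr.2]; exact h1)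
    calc ((P ×ˢ P).filter (fun q => q.1 = q.2)).card
        ≤ (Finset.univ : Finset (Fin m × Fin m)).card :=
          Finset.card_le_card_of_injOn _ (fun a _ => Finset.mem_univ _) hinj
      _ = m ^ 2 := by
        simp only [Finset.card_univ, Fintype.card_prod, Fintype.card_fin]; ring
  have hA1 : (Finset.univ.filter
      (fun q : (Fin m × Fin m) × Fin m × Fin m => q.1.1 = q.2.1)).card ≤ m ^ 3 := by
    refine hinjle _ (fun q => (q.1.1, q.1.2, q.2.2)) ?_
    intro q hq r hr h
    simp only [Finset.coe_filter, Set.mem_setOf_eq, Finset.mem_univ, true_and] at hq hr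
    simp only [Prod.mk.injEq] at h
    obtain ⟨h1, h2, h3⟩ := h
    exact Prod.ext (Prod.ext h1 h2) (Prod.ext (by rw [← hq, ← hr]; exact h1) h3)
  have hA2 : (Finset.univ.filter
      (fun q : (Fin m × Fin m) × Fin m × Fin m => q.1.1 = q.2.2)).card ≤ m ^ 3 := by
    refine hinjle _ (fun q => (q.1.1, q.1.2, q.2.1)) ?_
    intro q hq r hr h
    simp only [Finset.coe_filter, Set.mem_setOf_eq, Finset.mem_univ, true_and] at hq hr
    simp only [Prod.mk.injEq] at h
    obtain ⟨h1, h2, h3⟩ := h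
    exact Prod.ext (Prod.ext h1 h2) (Prod.ext h3 (by rw [← hq, ← hr]; exact h1))
  have hA3 : (Finset.univ.filter
      (fun q : (Fin m × Fin m) × Fin m × Fin m => q.1.2 = q.2.1)).card ≤ m ^ 3 := by
    refine hinjle _ (fun q => (q.1.1, q.1.2, q.2.2)) ?_
    intro q hq r hr h
    simp only [Finset.coe_filter, Set.mem_setOf_eq, Finset.mem_univ, true_and] at hq hr
    simp only [Prod.mk.injEq] at h
    obtain ⟨h1, h2, h3⟩ := h
    exact Prod.ext (Prod.ext h1 h2) (Prod.ext (by rw [← hq, ← hr]; exact h2) h3)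
  have hA4 : (Finset.univ.filter
      (fun q : (Fin m × Fin m) × Fin m × Fin m => q.1.2 = q.2.2)).card ≤ m ^ 3 := by
    refine hinjle _ (fun q => (q.1.1, q.1.2, q.2.1)) ?_
    intro q hq r hr h
    simp only [Finset.coe_filter, Set.mem_setOf_eq, Finset.mem_univ, true_and] at hq hr
    simp only [Prod.mk.injEq] at h
    obtain ⟨h1, h2, h3⟩ := h
    exact Prod.ext (Prod.ext h1 h2) (Prod.ext h3 (by rw [← hq, ← hr]; exact h2))
  have hsubset : (((P ×ˢ P).filter (fun q => ¬ q.1 = q.2)).filter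
        (fun q : (Fin m × Fin m) × Fin m × Fin m =>
          q.1.1 = q.2.1 ∨ q.1.1 = q.2.2 ∨ q.1.2 = q.2.1 ∨ q.1.2 = q.2.2)) ⊆
      (Finset.univ.filter (fun q : (Fin m × Fin m) × Fin m × Fin m => q.1.1 = q.2.1))
      ∪ (Finset.univ.filter (fun q : (Fin m × Fin m) × Fin m × Fin m => q.1.1 = q.2.2))
      ∪ (Finset.univ.filter (fun q : (Fin m × Fin m) × Fin m × Fin m => q.1.2 = q.2.1))
      ∪ (Finset.univ.filter (fun q : (Fin m × Fin m) × Fin m × Fin m => q.1.2 = q.2.2)) := by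
    intro q hq
    simp only [Finset.mem_filter, Finset.mem_union, Finset.mem_univ, true_and] at hq ⊢
    tauto
  have hc2 : (((P ×ˢ P).filter (fun q => ¬ q.1 = q.2)).filter
        (fun q : (Fin m × Fin m) × Fin m × Fin m =>
          q.1.1 = q.2.1 ∨ q.1.1 = q.2.2 ∨ q.1.2 = q.2.1 ∨ q.1.2 = q.2.2)).card
      ≤ 4 * m ^ 3 := by
    refine le_trans (Finset.card_le_card hsubset) ?_
    refine le_trans (Finset.card_union_le _ _) ?_
    have h12 := Finset.card_union_le
      ((Finset.univ.filter (fun q : (Fin m × Fin m) × Fin m × Fin m => q.1.1 = q.2.1))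
      ∪ (Finset.univ.filter (fun q : (Fin m × Fin m) × Fin m × Fin m => q.1.1 = q.2.2)))
      (Finset.univ.filter (fun q : (Fin m × Fin m) × Fin m × Fin m => q.1.2 = q.2.1))
    have h123 := Finset.card_union_le
      (Finset.univ.filter (fun q : (Fin m × Fin m) × Fin m × Fin m => q.1.1 = q.2.1))
      (Finset.univ.filter (fun q : (Fin m × Fin m) × Fin m × Fin m => q.1.1 = q.2.2))
    omega
  -- final arithmetic
  have hc1' : ((((P ×ˢ P).filter (fun q => q.1 = q.2)).card : ℝ)) ≤ (m : ℝ) ^ 2 := by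
    exact_mod_cast hc1
  have hc2' : (((((P ×ˢ P).filter (fun q => ¬ q.1 = q.2)).filter
        (fun q : (Fin m × Fin m) × Fin m × Fin m =>
          q.1.1 = q.2.1 ∨ q.1.1 = q.2.2 ∨ q.1.2 = q.2.1 ∨ q.1.2 = q.2.2)).card : ℝ))
      ≤ 4 * (m : ℝ) ^ 3 := by exact_mod_cast hc2
  have hmr : (0:ℝ) ≤ (m : ℝ) := Nat.cast_nonneg m
  have hm3 : (m : ℝ) ^ 2 ≤ δ * (m : ℝ) ^ 3 := by nlinarith
  have hnn : (0:ℝ) ≤ δ * p * (m : ℝ) ^ 3 := by positivity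
  nlinarith [hbig, mul_le_mul_of_nonneg_right hc1' hp0,
    mul_le_mul_of_nonneg_right hm3 hp0,
    mul_le_mul_of_nonneg_right hc2' (mul_nonneg hδ.le hp0)]
end

section
/- Suppose that for every subset H of the vertex set of G with |H| > ε·n/4 there exists a nonempty subset T ⊆ H such that: (a) the number of edges of G between T and H∖T is at most ε·|T|·d/2; and (b) the induced subgraph G_T can be made a forest by removing at most ε·|T|·d/4 of its edges. Then G can be made a forest by removing at most ε·n·d edges; that is, G is ε-close to cycle-free. -/
open SimpleGraph

namespace CF

variable {V : Type} [Fintype V] [DecidableEq V]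

/-- The subgraph of `G` induced on the vertex set `S` (kept as a graph on `V`). -/
def inducedSub (G : SimpleGraph V) (S : Set V) : SimpleGraph V where
  Adj u v := u ∈ S ∧ v ∈ S ∧ G.Adj u v
  symm := ⟨fun u v h => ⟨h.2.1, h.1, h.2.2.symm⟩⟩
  loopless := ⟨fun v h => G.loopless.irrefl v h.2.2⟩

end CF

lemma cf_acyclic_of_split {V : Type} (G' A B : SimpleGraph V) (P : V → Prop)
    (hA : A.IsAcyclic) (hB : B.IsAcyclic)
    (h : ∀ u v, G'.Adj u v → (P u ∧ P v ∧ A.Adj u v) ∨ (¬P u ∧ ¬ P v ∧ B.Adj u v)) :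
    G'.IsAcyclic := by
  have key : ∀ {a b : V} (w : G'.Walk a b),
      (P a → ∀ e ∈ w.edges, e ∈ A.edgeSet) ∧ (¬ P a → ∀ e ∈ w.edges, e ∈ B.edgeSet) := by
    intro a b w
    induction w with
    | nil => simp
    | @cons a c b hadj w ih =>
      rcases h _ _ hadj with ⟨hpa, hpc, hA'⟩ | ⟨hpa, hpc, hB'⟩
      · refine ⟨fun _ e he => ?_, fun hna => absurd hpa hna⟩
        rw [SimpleGraph.Walk.edges_cons, List.mem_cons] at he
        rcases he with rfl | he
        · exact hA'
        · exact ih.1 hpc e he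
      · refine ⟨fun hpa' => absurd hpa' hpa, fun _ e he => ?_⟩
        rw [SimpleGraph.Walk.edges_cons, List.mem_cons] at he
        rcases he with rfl | he
        · exact hB'
        · exact ih.2 hpc e he
  intro v c hc
  by_cases hv : P v
  · exact hA (c.transfer A ((key c).1 hv)) (hc.transfer _)
  · exact hB (c.transfer B ((key c).2 hv)) (hc.transfer _)

lemma cf_induced_le {V : Type} [Fintype V] [DecidableEq V] (G : SimpleGraph V) (S : Set V) :
    CF.inducedSub G S ≤ G := fun _ _ h => h.2.2

lemma cf_induced_mono {V : Type} [Fintype V] [DecidableEq V] (G : SimpleGraph V)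
    {S S' : Set V} (h : S ⊆ S') : CF.inducedSub G S ≤ CF.inducedSub G S' :=
  fun _ _ hadj => ⟨h hadj.1, h hadj.2.1, hadj.2.2⟩

/-- Base case: all edges of the induced subgraph, counted. -/
lemma cf_base {V : Type} [Fintype V] [DecidableEq V] (G : SimpleGraph V) [DecidableRel G.Adj]
    (d : ℕ) (hdeg : ∀ v, G.degree v ≤ d) (H : Finset V) :
    ∃ F : Finset (Sym2 V), ↑F ⊆ (CF.inducedSub G ↑H).edgeSet ∧
      2 * F.card ≤ H.card * d ∧
      ((CF.inducedSub G ↑H).deleteEdges ↑F).IsAcyclic := by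
  classical
  haveI : DecidableRel (CF.inducedSub G (↑H : Set V)).Adj := Classical.decRel _
  refine ⟨(CF.inducedSub G ↑H).edgeFinset, by simp, ?_, ?_⟩
  · have hsum : ∑ v, (CF.inducedSub G ↑H).degree v = 2 * (CF.inducedSub G ↑H).edgeFinset.card :=
      SimpleGraph.sum_degrees_eq_twice_card_edges _
    rw [← hsum]
    have h0 : ∀ v ∈ Finset.univ, v ∉ H → (CF.inducedSub G ↑H).degree v = 0 := by
      intro v _ hv
      simp only [SimpleGraph.degree, Finset.card_eq_zero]
      ext u
      simp only [SimpleGraph.mem_neighborFinset, Finset.notMem_empty, iff_false]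
      intro hadj
      exact hv hadj.1
    calc ∑ v, (CF.inducedSub G ↑H).degree v = ∑ v ∈ H, (CF.inducedSub G ↑H).degree v :=
          (Finset.sum_subset (Finset.subset_univ H) h0).symm
      _ ≤ ∑ _v ∈ H, d := Finset.sum_le_sum (fun v _ => le_trans
            (Finset.card_le_card (fun u hu => by
              rw [SimpleGraph.mem_neighborFinset] at hu ⊢
              exact hu.2.2)) (hdeg v))
      _ = H.card * d := by rw [Finset.sum_const, smul_eq_mul]
  · have hb : ((CF.inducedSub G ↑H).deleteEdges ↑(CF.inducedSub G ↑H).edgeFinset) = ⊥ := by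
      ext u v
      simp [SimpleGraph.mem_edgeSet]
    rw [hb]
    exact SimpleGraph.isAcyclic_bot

lemma cf_small {V : Type} [Fintype V] [DecidableEq V] (G : SimpleGraph V) [DecidableRel G.Adj]
    (d : ℕ) (hdeg : ∀ v, G.degree v ≤ d)
    (ε : ℝ) (hε0 : 0 < ε) (H : Finset V)
    (hsmall : (H.card : ℝ) ≤ ε * Fintype.card V / 4) :
    ∃ F : Finset (Sym2 V), ↑F ⊆ (CF.inducedSub G ↑H).edgeSet ∧
      (F.card : ℝ) ≤ 3/4 * ε * H.card * d + ε * Fintype.card V * d / 8 ∧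
      ((CF.inducedSub G ↑H).deleteEdges ↑F).IsAcyclic := by
  obtain ⟨F, hsub, hcard, hacyc⟩ := cf_base G d hdeg H
  refine ⟨F, hsub, ?_, hacyc⟩
  have h1 : (2 * F.card : ℝ) ≤ (H.card : ℝ) * d := by exact_mod_cast hcard
  have h2 : (0:ℝ) ≤ d := Nat.cast_nonneg d
  have h3 : (0:ℝ) ≤ (H.card : ℝ) := Nat.cast_nonneg _
  nlinarith [mul_le_mul_of_nonneg_right hsmall h2, mul_nonneg (mul_nonneg (le_of_lt hε0) h3) h2]

lemma cf_main {V : Type} [Fintype V] [DecidableEq V]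
    (G : SimpleGraph V) [DecidableRel G.Adj] (d : ℕ)
    (hdeg : ∀ v, G.degree v ≤ d)
    (ε : ℝ) (hε0 : 0 < ε)
    (hyp : ∀ H : Finset V, ε * Fintype.card V / 4 < (H.card : ℝ) →
      ∃ T : Finset V, T ⊆ H ∧ T.Nonempty ∧
        ({e : Sym2 V | ∃ u v, e = s(u, v) ∧ G.Adj u v ∧ u ∈ T ∧ v ∈ H ∧ v ∉ T}.ncard : ℝ)
            ≤ ε * T.card * d / 2 ∧
        ∃ F : Finset (Sym2 V), ↑F ⊆ (CF.inducedSub G ↑T).edgeSet ∧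
          (F.card : ℝ) ≤ ε * T.card * d / 4 ∧
          ((CF.inducedSub G ↑T).deleteEdges ↑F).IsAcyclic) :
    ∀ n : ℕ, ∀ H : Finset V, H.card ≤ n →
      ∃ F : Finset (Sym2 V), ↑F ⊆ (CF.inducedSub G ↑H).edgeSet ∧
        (F.card : ℝ) ≤ 3/4 * ε * H.card * d + ε * Fintype.card V * d / 8 ∧
        ((CF.inducedSub G ↑H).deleteEdges ↑F).IsAcyclic := by
  intro n
  induction n with
  | zero =>
    intro H hH
    refine cf_small G d hdeg ε hε0 H ?_
    rw [Nat.le_zero] at hH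
    rw [hH]
    push_cast
    positivity
  | succ n ih =>
    intro H hH
    by_cases hbig : ε * Fintype.card V / 4 < (H.card : ℝ)
    · obtain ⟨T, hTH, hTne, hcross, F_T, hFTsub, hFTcard, hFTacyc⟩ := hyp H hbig
      have hcardlt : (H \ T).card ≤ n := by
        have h1 : (H \ T).card = H.card - T.card := Finset.card_sdiff_of_subset hTH
        have h2 : 0 < T.card := Finset.card_pos.mpr hTne
        omega
      obtain ⟨F', hF'sub, hF'card, hF'acyc⟩ := ih (H \ T) hcardlt
      set C : Set (Sym2 V) :=
        {e | ∃ u v, e = s(u, v) ∧ G.Adj u v ∧ u ∈ T ∧ v ∈ H ∧ v ∉ T} with hC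
      have hCfin : C.Finite := Set.toFinite C
      refine ⟨F' ∪ hCfin.toFinset ∪ F_T, ?_, ?_, ?_⟩
      · intro e he
        simp only [Finset.coe_union, Set.mem_union, Finset.mem_coe] at he
        rcases he with (he | he) | he
        · exact SimpleGraph.edgeSet_mono (cf_induced_mono G
            (by rw [Finset.coe_sdiff]; exact Set.diff_subset)) (hF'sub he)
        · rw [Set.Finite.mem_toFinset] at he
          obtain ⟨u, v, rfl, hGuv, huT, hvH, hvT⟩ := he
          exact (SimpleGraph.mem_edgeSet (CF.inducedSub G ↑H)).mpr
            ⟨Finset.mem_coe.mpr (hTH huT), Finset.mem_coe.mpr hvH, hGuv⟩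
        · exact SimpleGraph.edgeSet_mono (cf_induced_mono G
            (Finset.coe_subset.mpr hTH)) (hFTsub he)
      · have hle : (F' ∪ hCfin.toFinset ∪ F_T).card ≤ F'.card + hCfin.toFinset.card + F_T.card :=
          le_trans (Finset.card_union_le _ _) (by
            have := Finset.card_union_le F' hCfin.toFinset
            omega)
        have hCcard : (hCfin.toFinset.card : ℝ) ≤ ε * T.card * d / 2 := by
          rwa [Set.ncard_eq_toFinset_card C hCfin] at hcross
        have hsd : ((H \ T).card : ℝ) = (H.card : ℝ) - T.card := by
          rw [Finset.card_sdiff_of_subset hTH]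
          exact_mod_cast Nat.cast_sub (Finset.card_le_card hTH)
        have hle' : ((F' ∪ hCfin.toFinset ∪ F_T).card : ℝ)
            ≤ (F'.card : ℝ) + hCfin.toFinset.card + F_T.card := by exact_mod_cast hle
        rw [hsd] at hF'card
        linarith
      · apply cf_acyclic_of_split _ ((CF.inducedSub G ↑T).deleteEdges ↑F_T)
          ((CF.inducedSub G ↑(H \ T)).deleteEdges ↑F') (· ∈ T) hFTacyc hF'acyc
        intro u v hadj
        rw [SimpleGraph.deleteEdges_adj] at hadj
        obtain ⟨⟨huH, hvH, hGuv⟩, hne⟩ := hadj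
        simp only [Finset.coe_union, Set.mem_union, Finset.mem_coe, not_or] at hne
        obtain ⟨⟨hne1, hne2⟩, hne3⟩ := hne
        rw [Set.Finite.mem_toFinset] at hne2
        by_cases hu : u ∈ T <;> by_cases hv : v ∈ T
        · exact Or.inl ⟨hu, hv, SimpleGraph.deleteEdges_adj.mpr
            ⟨⟨Finset.mem_coe.mpr hu, Finset.mem_coe.mpr hv, hGuv⟩, hne3⟩⟩
        · exact absurd ⟨u, v, rfl, hGuv, hu, Finset.mem_coe.mp hvH, hv⟩ hne2
        · exact absurd ⟨v, u, Sym2.eq_swap, hGuv.symm, hv, Finset.mem_coe.mp huH, hu⟩ hne2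
        · refine Or.inr ⟨hu, hv, SimpleGraph.deleteEdges_adj.mpr ⟨⟨?_, ?_, hGuv⟩, hne1⟩⟩
          · rw [Finset.coe_sdiff]; exact ⟨huH, hu⟩
          · rw [Finset.coe_sdiff]; exact ⟨hvH, hv⟩
    · exact cf_small G d hdeg ε hε0 H (le_of_not_gt hbig)


/-- If every vertex subset `H` with `|H| > εn/4` contains a nonempty `T ⊆ H`
with at most `ε·|T|·d/2` edges between `T` and `H∖T` whose induced subgraph can be made a
forest by deleting at most `ε·|T|·d/4` edges, then `G` can be made a forest by removing at
most `ε·n·d` edges. -/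
theorem stmt16 {V : Type} [Fintype V] [DecidableEq V]
    (G : SimpleGraph V) [DecidableRel G.Adj] (d : ℕ) (hd : 1 ≤ d)
    (hdeg : ∀ v, G.degree v ≤ d)
    (ε : ℝ) (hε0 : 0 < ε) (hε1 : ε < 1)
    (hyp : ∀ H : Finset V, ε * Fintype.card V / 4 < (H.card : ℝ) →
      ∃ T : Finset V, T ⊆ H ∧ T.Nonempty ∧
        ({e : Sym2 V | ∃ u v, e = s(u, v) ∧ G.Adj u v ∧ u ∈ T ∧ v ∈ H ∧ v ∉ T}.ncard : ℝ)
            ≤ ε * T.card * d / 2 ∧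
        ∃ F : Finset (Sym2 V), ↑F ⊆ (CF.inducedSub G ↑T).edgeSet ∧
          (F.card : ℝ) ≤ ε * T.card * d / 4 ∧
          ((CF.inducedSub G ↑T).deleteEdges ↑F).IsAcyclic) :
    ∃ F : Finset (Sym2 V), ↑F ⊆ G.edgeSet ∧ (F.card : ℝ) ≤ ε * Fintype.card V * d ∧
      (G.deleteEdges ↑F).IsAcyclic := by
  obtain ⟨F, hsub, hcard, hacyc⟩ :=
    cf_main G d hdeg ε hε0 hyp Finset.univ.card Finset.univ le_rfl
  have huniv : CF.inducedSub G ↑(Finset.univ : Finset V) = G := by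
    ext u v
    simp [CF.inducedSub]
  rw [huniv] at hsub hacyc
  refine ⟨F, hsub, ?_, hacyc⟩
  rw [Finset.card_univ] at hcard
  have hx : (0:ℝ) ≤ ε * Fintype.card V * d := by positivity
  linarith
end
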